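/- Let d ≥ 1, H ∈ (0,1), A ∈ ℝ^{d×d}, and let (B_t)_{t∈[0,1]} be a d-dimensional fractional Brownian motion with Hurst parameter H with continuous sample paths. Let X̃_t := ∫₀^t exp((t−s)A) A B_s ds + B_t for t ∈ [0,1] (pathwise Bochner integral), let a_{ij}(t) denote the (i,j) entry of exp(tA)A, and let C₂ := max_{i,j=1,…,d} sup_{t∈[0,1]} |a_{ij}(t)|² + max_{i,j=1,…,d} sup_{t∈[0,1]} |a_{ij}(t)| + 1. Then for every u ∈ [0,1], E[ ‖X̃_u‖² ] ≤ d² · C₂ · u^{2H}, where ‖·‖ is the Euclidean norm on ℝ^d. -/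

import Mathlib

open MeasureTheory ProbabilityTheory Real Set
open scoped ProbabilityTheory ENNReal

/-- The matrix `exp(tA) A`, whose entries are the `a_{ij}(t)` of the paper. -/
noncomputable def aEnt {d : ℕ} (A : Matrix (Fin d) (Fin d) ℝ) (t : ℝ) :
    Matrix (Fin d) (Fin d) ℝ :=
  NormedSpace.exp (t • A) * A

/-- The centered solution `X̃_t = ∫₀ᵗ exp((t-s)A) A B_s ds + B_t` (written
coordinatewise) of the fractional Ornstein–Uhlenbeck equation `dX_t = A X_t dt + dB_t^H`. -/
noncomputable def fouCentered {Ω : Type*} {d : ℕ} (A : Matrix (Fin d) (Fin d) ℝ)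
    (B : ℝ → Ω → Fin d → ℝ) (t : ℝ) (ω : Ω) (i : Fin d) : ℝ :=
  (∫ s in (0:ℝ)..t, ∑ j, aEnt A (t - s) i j * B s ω j) + B t ω i

/-- The constant `C₂ = max_{i,j} sup_{t ∈ [0,1]} |a_{ij}(t)|² +
max_{i,j} sup_{t ∈ [0,1]} |a_{ij}(t)| + 1`. -/
noncomputable def entC2 {d : ℕ} (A : Matrix (Fin d) (Fin d) ℝ) : ℝ :=
  (⨆ p : Fin d × Fin d × Icc (0:ℝ) 1, |aEnt A (p.2.2 : ℝ) p.1 p.2.1| ^ 2) +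
    (⨆ p : Fin d × Fin d × Icc (0:ℝ) 1, |aEnt A (p.2.2 : ℝ) p.1 p.2.1|) + 1

/-- A `d`-dimensional fractional Brownian motion with Hurst parameter `H` on `[0,1]`,
with continuous sample paths: every finite linear combination of coordinate values is a
centered Gaussian random variable, distinct coordinates are independent (their
cross-covariances vanish) and each coordinate has the fBM covariance
`E[B_t^i B_s^i] = (1/2)(t^(2H) + s^(2H) - |t-s|^(2H))`. -/
def IsMultiFBM {Ω : Type*} [MeasureSpace Ω] {d : ℕ} (H : ℝ)
    (B : ℝ → Ω → Fin d → ℝ) : Prop :=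
  (∀ t ∈ Icc (0:ℝ) 1, ∀ i, Measurable fun ω => B t ω i) ∧
  (∀ ω i, ContinuousOn (fun t => B t ω i) (Icc (0:ℝ) 1)) ∧
  (∀ (n : ℕ) (ts : Fin n → ℝ) (idx : Fin n → Fin d) (cs : Fin n → ℝ),
    (∀ k, ts k ∈ Icc (0:ℝ) 1) →
    ∃ v : NNReal,
      Measure.map (fun ω => ∑ k, cs k * B (ts k) ω (idx k)) (ℙ : Measure Ω) =
        gaussianReal 0 v) ∧
  (∀ (i j : Fin d) (s t : ℝ), s ∈ Icc (0:ℝ) 1 → t ∈ Icc (0:ℝ) 1 →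
    (∫ ω, B s ω i * B t ω j ∂(ℙ : Measure Ω)) =
      if i = j then (s ^ (2 * H) + t ^ (2 * H) - |t - s| ^ (2 * H)) / 2 else 0)

/-- Two functions in `L²` have integrable product. -/
lemma aux_mul_int {Ω : Type*} [MeasureSpace Ω] {f g : Ω → ℝ} (hf : MemLp f 2 (ℙ : Measure Ω))
    (hg : MemLp g 2 (ℙ : Measure Ω)) : Integrable (fun ω => f ω * g ω) (ℙ : Measure Ω) := by
  have h : (1:ℝ≥0∞)/1 = 1/2 + 1/2 := by
    simp [ENNReal.div_eq_inv_mul]; rw [ENNReal.inv_two_add_inv_two]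
  have := hg.smul (φ := f) (r := 1) hf
  rw [memLp_one_iff_integrable] at this
  simpa [smul_eq_mul, Pi.mul_def] using this

/-- Cauchy–Schwarz for the set integral on `Ioc 0 u`. -/
lemma aux_sq_setIntegral_le {f : ℝ → ℝ} {u : ℝ} (hu : 0 ≤ u)
    (hf : MemLp f 2 (volume.restrict (Ioc 0 u))) :
    (∫ s in Ioc 0 u, f s) ^ 2 ≤ u * ∫ s in Ioc 0 u, (f s) ^ 2 := by
  set μ := volume.restrict (Ioc (0:ℝ) u) with hμ
  have habs : MemLp (fun s => |f s|) 2 μ := hf.abs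
  have h1 : MemLp (fun _ : ℝ => (1:ℝ)) 2 μ := memLp_const 1
  have hcs := integral_mul_le_Lp_mul_Lq_of_nonneg (μ := μ) (p := 2) (q := 2)
    Real.HolderConjugate.two_two
    (Filter.Eventually.of_forall fun s => abs_nonneg (f s))
    (Filter.Eventually.of_forall fun _ => zero_le_one)
    (by simpa using habs) (by simpa using h1)
  have hrw : ∀ s, |f s| ^ (2:ℝ) = f s ^ 2 := fun s => by
    rw [show (2:ℝ) = ((2:ℕ):ℝ) by norm_num, Real.rpow_natCast, sq_abs]
  simp only [mul_one, Real.one_rpow, hrw] at hcs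
  have hμu : ∫ _ : ℝ, (1:ℝ) ∂μ = u := by
    simp [hμ, Real.volume_Ioc, ENNReal.toReal_ofReal hu, hu]
  rw [hμu] at hcs
  have hI2 : 0 ≤ ∫ s, f s ^ 2 ∂μ := integral_nonneg fun s => sq_nonneg _
  have h2 : (∫ s, f s ∂μ) ^ 2 ≤ (∫ s, |f s| ∂μ) ^ 2 := by
    rw [← sq_abs (∫ s, f s ∂μ)]
    exact pow_le_pow_left₀ (abs_nonneg _)
      (by simpa [Real.norm_eq_abs] using norm_integral_le_integral_norm (μ := μ) f) 2
  calc (∫ s, f s ∂μ) ^ 2 ≤ (∫ s, |f s| ∂μ) ^ 2 := h2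
    _ ≤ ((∫ s, f s ^ 2 ∂μ) ^ (1/(2:ℝ)) * u ^ (1/(2:ℝ))) ^ 2 :=
        pow_le_pow_left₀ (integral_nonneg fun s => abs_nonneg _) hcs 2
    _ = u * ∫ s, f s ^ 2 ∂μ := by
        rw [mul_pow, ← Real.rpow_natCast ((∫ s, f s ^ 2 ∂μ) ^ (1/(2:ℝ))) 2,
          ← Real.rpow_natCast (u ^ (1/(2:ℝ))) 2, ← Real.rpow_mul hI2, ← Real.rpow_mul hu]
        norm_num [Real.rpow_one]
        ring

attribute [local instance] Matrix.linftyOpNormedRing Matrix.linftyOpNormedAlgebra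

/-- Entries of `exp(tA) A` depend continuously on `t`. -/
lemma aux_aEnt_continuous {d : ℕ} (A : Matrix (Fin d) (Fin d) ℝ) (i j : Fin d) :
    Continuous fun t : ℝ => aEnt A t i j := by
  have h1 : Continuous fun t : ℝ => NormedSpace.exp (t • A) * A :=
    ((NormedSpace.exp_continuous).comp (continuous_id.smul continuous_const)).mul
      continuous_const
  exact (continuous_apply j).comp ((continuous_apply i).comp h1)

set_option maxHeartbeats 1000000 in
/-- For `d ≥ 1`, `H ∈ (0,1)`, `A ∈ ℝ^(d×d)` and a `d`-dimensional fBM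
`B` with Hurst parameter `H`, the centered fOU process `X̃` satisfies
`E[‖X̃_u‖²] ≤ d² C₂ u^(2H)` for every `u ∈ [0,1]` (Euclidean norm). -/
theorem fou_multidim_second_moment_upper {Ω : Type*} [MeasureSpace Ω]
    [IsProbabilityMeasure (ℙ : Measure Ω)] (d : ℕ) (hd : 1 ≤ d) (H : ℝ)
    (hH : H ∈ Ioo (0:ℝ) 1) (A : Matrix (Fin d) (Fin d) ℝ)
    (B : ℝ → Ω → Fin d → ℝ) (hB : IsMultiFBM H B) :
    ∀ u ∈ Icc (0:ℝ) 1,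
      (∫ ω, (∑ i, (fouCentered A B u ω i) ^ 2) ∂(ℙ : Measure Ω)) ≤
        d ^ 2 * entC2 A * u ^ (2 * H) := by
  obtain ⟨hmeas, hcont, -, hcov⟩ := hB
  intro u hu
  have hH0 : (0:ℝ) < 2 * H := by linarith [hH.1]
  have i0 : Fin d := ⟨0, hd⟩
  -- value of second moments
  have hBsqval : ∀ t ∈ Icc (0:ℝ) 1, ∀ j, ∫ ω, (B t ω j) ^ 2 ∂(ℙ : Measure Ω) = t ^ (2*H) := by
    intro t ht j
    have h := hcov j j t t ht ht
    rw [if_pos rfl] at h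
    simp only [sub_self, abs_zero, Real.zero_rpow (ne_of_gt hH0), sub_zero] at h
    simp only [pow_two]
    rw [h]; ring
  -- degenerate case u = 0
  rcases eq_or_lt_of_le hu.1 with hu0 | hu0
  · subst hu0
    have hfc : ∀ ω i, fouCentered A B 0 ω i = B 0 ω i := by
      intro ω i
      simp [fouCentered, intervalIntegral.integral_same]
    have hR : (0:ℝ) ^ (2*H) = 0 := Real.zero_rpow (ne_of_gt hH0)
    simp only [hfc, hR, mul_zero]
    by_cases hint : Integrable (fun ω => ∑ i, (B 0 ω i) ^ 2) (ℙ : Measure Ω)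
    · have h01 : (0:ℝ) ∈ Icc (0:ℝ) 1 := ⟨le_refl 0, zero_le_one⟩
      have hi : ∀ i : Fin d, Integrable (fun ω => (B 0 ω i) ^ 2) (ℙ : Measure Ω) := by
        intro i
        refine hint.mono' ((hmeas 0 h01 i).pow_const 2).aestronglyMeasurable ?_
        refine Filter.Eventually.of_forall fun ω => ?_
        rw [Real.norm_eq_abs, abs_of_nonneg (sq_nonneg _)]
        exact Finset.single_le_sum (fun k _ => sq_nonneg (B 0 ω k)) (Finset.mem_univ i)
      rw [integral_finset_sum _ fun i _ => hi i]
      apply le_of_eq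
      refine Finset.sum_eq_zero fun i _ => ?_
      rw [hBsqval 0 h01 i, Real.zero_rpow (ne_of_gt hH0)]
    · rw [integral_undef hint]
  -- main case 0 < u
  -- uniform bounds on the entries of exp(tA)A
  set M2 := (⨆ p : Fin d × Fin d × Icc (0:ℝ) 1, |aEnt A (p.2.2 : ℝ) p.1 p.2.1| ^ 2) with hM2def
  set M1 := (⨆ p : Fin d × Fin d × Icc (0:ℝ) 1, |aEnt A (p.2.2 : ℝ) p.1 p.2.1|) with hM1def
  have hCex : ∀ ij : Fin d × Fin d, ∃ C, 0 ≤ C ∧ ∀ t ∈ Icc (0:ℝ) 1, |aEnt A t ij.1 ij.2| ≤ C := by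
    intro ij
    obtain ⟨C, hC⟩ := (isCompact_Icc.image ((aux_aEnt_continuous A ij.1 ij.2).abs)).bddAbove
    have hCb : ∀ t ∈ Icc (0:ℝ) 1, |aEnt A t ij.1 ij.2| ≤ C := fun t ht => hC ⟨t, ht, rfl⟩
    exact ⟨C, (abs_nonneg _).trans (hCb 0 ⟨le_rfl, zero_le_one⟩), hCb⟩
  choose Cb hCb0 hCble using hCex
  set CC := ∑ ij : Fin d × Fin d, Cb ij with hCC
  have hCCle : ∀ (i j : Fin d), ∀ t ∈ Icc (0:ℝ) 1, |aEnt A t i j| ≤ CC :=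
    fun i j t ht => (hCble (i,j) t ht).trans
      (Finset.single_le_sum (fun k _ => hCb0 k) (Finset.mem_univ (i,j)))
  have hbdd1 : BddAbove (range fun p : Fin d × Fin d × Icc (0:ℝ) 1 =>
      |aEnt A (p.2.2 : ℝ) p.1 p.2.1|) := by
    refine ⟨CC, ?_⟩; rintro x ⟨p, rfl⟩; exact hCCle p.1 p.2.1 p.2.2 p.2.2.prop
  have hbdd2 : BddAbove (range fun p : Fin d × Fin d × Icc (0:ℝ) 1 =>
      |aEnt A (p.2.2 : ℝ) p.1 p.2.1| ^ 2) := by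
    refine ⟨CC^2, ?_⟩; rintro x ⟨p, rfl⟩
    exact pow_le_pow_left₀ (abs_nonneg _) (hCCle p.1 p.2.1 p.2.2 p.2.2.prop) 2
  have hM1le : ∀ (i j : Fin d), ∀ t ∈ Icc (0:ℝ) 1, |aEnt A t i j| ≤ M1 :=
    fun i j t ht => le_ciSup hbdd1 (⟨i, j, ⟨t, ht⟩⟩ : Fin d × Fin d × Icc (0:ℝ) 1)
  have hM2le : ∀ (i j : Fin d), ∀ t ∈ Icc (0:ℝ) 1, (aEnt A t i j) ^ 2 ≤ M2 := by
    intro i j t ht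
    rw [← sq_abs]
    exact le_ciSup hbdd2 (⟨i, j, ⟨t, ht⟩⟩ : Fin d × Fin d × Icc (0:ℝ) 1)
  have hM10 : 0 ≤ M1 := (abs_nonneg _).trans (hM1le i0 i0 0 ⟨le_rfl, zero_le_one⟩)
  have hM20 : 0 ≤ M2 := (sq_nonneg _).trans (hM2le i0 i0 0 ⟨le_rfl, zero_le_one⟩)
  -- clamped process and joint measurability
  set c : ℝ → ℝ := fun s => max 0 (min s 1) with hc
  have c_cont : Continuous c := continuous_const.max (continuous_id.min continuous_const)
  have c_mem : ∀ s, c s ∈ Icc (0:ℝ) 1 :=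
    fun s => ⟨le_max_left _ _, max_le zero_le_one (min_le_right _ _)⟩
  have c_eq : ∀ s ∈ Icc (0:ℝ) 1, c s = s := fun s hs => by
    simp only [hc]; rw [min_eq_left hs.2, max_eq_right hs.1]
  have jm : ∀ j, Measurable (Function.uncurry fun (s : ℝ) (ω : Ω) => B (c s) ω j) := fun j =>
    measurable_uncurry_of_continuous_of_measurable
      (fun ω => (hcont ω j).comp_continuous c_cont c_mem)
      (fun s => hmeas _ (c_mem s) j)
  -- L² facts
  have hBsqint : ∀ t ∈ Icc (0:ℝ) 1, 0 < t → ∀ j,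
      Integrable (fun ω => (B t ω j) ^ 2) (ℙ : Measure Ω) := by
    intro t ht ht0 j
    by_contra hni
    have hv := hBsqval t ht j
    rw [integral_undef hni] at hv
    exact absurd hv.symm (ne_of_gt (Real.rpow_pos_of_pos ht0 _))
  have hBL2 : ∀ t ∈ Icc (0:ℝ) 1, 0 < t → ∀ j,
      MemLp (fun ω => B t ω j) 2 (ℙ : Measure Ω) := fun t ht ht0 j =>
    (memLp_two_iff_integrable_sq (hmeas t ht j).aestronglyMeasurable).mpr (hBsqint t ht ht0 j)
  -- measure setup
  set ν := volume.restrict (Ioc (0:ℝ) u) with hν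
  haveI hνfin : IsFiniteMeasure ν := by
    constructor
    rw [hν, Measure.restrict_apply_univ]
    simp only [Real.volume_Ioc]
    exact ENNReal.ofReal_lt_top
  have hae_mem : ∀ᵐ s ∂ν, s ∈ Ioc (0:ℝ) u := ae_restrict_mem measurableSet_Ioc
  have huI : u ∈ Icc (0:ℝ) 1 := hu
  have hsmem : ∀ s ∈ Ioc (0:ℝ) u, s ∈ Icc (0:ℝ) 1 := fun s hs => ⟨hs.1.le, hs.2.trans hu.2⟩
  have husmem : ∀ s ∈ Ioc (0:ℝ) u, u - s ∈ Icc (0:ℝ) 1 := fun s hs =>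
    ⟨by linarith [hs.2], by linarith [hs.1, hu.2]⟩
  have hd1 : (1:ℝ) ≤ d := by exact_mod_cast hd
  have hrpc : Continuous fun x : ℝ => x ^ (2*H) :=
    continuous_iff_continuousAt.mpr fun x => Real.continuousAt_rpow_const x _ (Or.inr hH0.le)
  -- per-coordinate bound
  have key : ∀ i : Fin d,
      Integrable (fun ω => (fouCentered A B u ω i) ^ 2) (ℙ : Measure Ω) ∧
      ∫ ω, (fouCentered A B u ω i) ^ 2 ∂(ℙ : Measure Ω) ≤
        ((d : ℝ) * M2 + M1 + 1) * u ^ (2*H) := by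
    intro i
    set G : ℝ → Ω → ℝ := fun s ω => ∑ j, aEnt A (u - s) i j * B (c s) ω j with hG
    set b : Ω → ℝ := fun ω => B u ω i with hb
    have hbL2 : MemLp b 2 (ℙ : Measure Ω) := hBL2 u huI hu0 i
    have hbmeas : Measurable b := hmeas u huI i
    have hbsq : Integrable (fun ω => (b ω) ^ 2) (ℙ : Measure Ω) := hBsqint u huI hu0 i
    have haentc : ∀ j, Continuous fun s : ℝ => aEnt A (u - s) i j :=
      fun j => (aux_aEnt_continuous A i j).comp (continuous_const.sub continuous_id)
    have hGmeas : Measurable (Function.uncurry G) := by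
      have heq : Function.uncurry G =
          fun p : ℝ × Ω => ∑ j, aEnt A (u - p.1) i j * B (c p.1) p.2 j := rfl
      rw [heq]
      exact Finset.measurable_sum _ fun j _ =>
        (((haentc j).measurable).comp measurable_fst).mul (jm j)
    have hGcont : ∀ ω, Continuous fun s => G s ω :=
      fun ω => continuous_finset_sum _ fun j _ =>
        (haentc j).mul ((hcont ω j).comp_continuous c_cont c_mem)
    -- pathwise identity
    have hfc : ∀ ω, fouCentered A B u ω i = (∫ s, G s ω ∂ν) + b ω := by
      intro ω
      have h1 : (∫ s in (0:ℝ)..u, ∑ j, aEnt A (u - s) i j * B s ω j)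
          = ∫ s in Ioc (0:ℝ) u, ∑ j, aEnt A (u - s) i j * B s ω j :=
        intervalIntegral.integral_of_le hu0.le
      have h2 : (∫ s in Ioc (0:ℝ) u, ∑ j, aEnt A (u - s) i j * B s ω j)
          = ∫ s, G s ω ∂ν := by
        refine setIntegral_congr_fun measurableSet_Ioc fun s hs => ?_
        simp only [hG, c_eq s (hsmem s hs)]
      simp only [fouCentered]
      rw [h1, h2]
    -- product space integrability
    set P := ν.prod (ℙ : Measure Ω) with hP
    have hWjint : ∀ j, Integrable (fun p : ℝ × Ω => (B (c p.1) p.2 j) ^ 2) P := by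
      intro j
      have hmsq : Measurable fun p : ℝ × Ω => (B (c p.1) p.2 j) ^ 2 := (jm j).pow_const 2
      refine (integrable_prod_iff hmsq.aestronglyMeasurable).mpr ⟨?_, ?_⟩
      · filter_upwards [hae_mem] with s hs
        have hcs : c s = s := c_eq s (hsmem s hs)
        simpa [hcs] using hBsqint s (hsmem s hs) hs.1 j
      · refine (integrable_const (1:ℝ)).mono'
          (hmsq.aestronglyMeasurable.norm.integral_prod_right') ?_
        filter_upwards [hae_mem] with s hs
        have hcs : c s = s := c_eq s (hsmem s hs)
        simp only [hcs, Real.norm_eq_abs, abs_pow, sq_abs]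
        rw [abs_of_nonneg (integral_nonneg fun ω => sq_nonneg _), hBsqval s (hsmem s hs) j]
        exact Real.rpow_le_one hs.1.le (hsmem s hs).2 hH0.le
    set W : ℝ × Ω → ℝ := fun p => (∑ j, (B (c p.1) p.2 j) ^ 2) + (b p.2) ^ 2 with hW
    have hWint : Integrable W P := by
      refine Integrable.add (integrable_finset_sum _ fun j _ => hWjint j) ?_
      have hone : Integrable (fun _ : ℝ => (1:ℝ)) ν := integrable_const _
      have := hone.mul_prod hbsq
      simpa using this
    have hWnn : ∀ p, 0 ≤ W p :=
      fun p => add_nonneg (Finset.sum_nonneg fun j _ => sq_nonneg _) (sq_nonneg _)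
    have hsumle : ∀ p : ℝ × Ω, (∑ j, (B (c p.1) p.2 j) ^ 2) ≤ W p :=
      fun p => le_add_of_nonneg_right (sq_nonneg _)
    have hble : ∀ p : ℝ × Ω, (b p.2) ^ 2 ≤ W p :=
      fun p => le_add_of_nonneg_left (Finset.sum_nonneg fun j _ => sq_nonneg _)
    have hGb : ∀ s ∈ Ioc (0:ℝ) u, ∀ ω, |G s ω| ≤ M1 * ∑ j, |B (c s) ω j| := by
      intro s hs ω
      refine (Finset.abs_sum_le_sum_abs _ _).trans ?_
      rw [Finset.mul_sum]
      refine Finset.sum_le_sum fun j _ => ?_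
      rw [abs_mul]
      exact mul_le_mul_of_nonneg_right (hM1le i j _ (husmem s hs)) (abs_nonneg _)
    have hG2b : ∀ s ∈ Ioc (0:ℝ) u, ∀ ω, (G s ω) ^ 2 ≤ ((d:ℝ) * M1 ^ 2) * W (s, ω) := by
      intro s hs ω
      have h1 : (G s ω) ^ 2 ≤ (M1 * ∑ j, |B (c s) ω j|) ^ 2 := by
        rw [← sq_abs (G s ω)]
        exact pow_le_pow_left₀ (abs_nonneg _) (hGb s hs ω) 2
      have h2 : (∑ j, |B (c s) ω j|) ^ 2 ≤ (d : ℝ) * ∑ j, (B (c s) ω j) ^ 2 := by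
        have := sq_sum_le_card_mul_sum_sq (s := (Finset.univ : Finset (Fin d)))
          (f := fun j => |B (c s) ω j|)
        simpa [sq_abs] using this
      calc (G s ω) ^ 2 ≤ (M1 * ∑ j, |B (c s) ω j|) ^ 2 := h1
        _ = M1 ^ 2 * (∑ j, |B (c s) ω j|) ^ 2 := by ring
        _ ≤ M1 ^ 2 * ((d:ℝ) * ∑ j, (B (c s) ω j) ^ 2) :=
            mul_le_mul_of_nonneg_left h2 (sq_nonneg _)
        _ = ((d:ℝ) * M1 ^ 2) * (∑ j, (B (c s) ω j) ^ 2) := by ring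
        _ ≤ ((d:ℝ) * M1 ^ 2) * W (s, ω) :=
            mul_le_mul_of_nonneg_left (hsumle (s, ω)) (by positivity)
    have haeP : ∀ᵐ p : ℝ × Ω ∂P, p.1 ∈ Ioc (0:ℝ) u := by
      rw [ae_iff]
      have hset : {p : ℝ × Ω | ¬ p.1 ∈ Ioc (0:ℝ) u} = ((Ioc (0:ℝ) u)ᶜ) ×ˢ (univ : Set Ω) := by
        ext p; simp
      rw [hset, hP, Measure.prod_prod, hν, Measure.restrict_apply measurableSet_Ioc.compl]
      simp
    have hG2intP : Integrable (fun p : ℝ × Ω => (G p.1 p.2) ^ 2) P := by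
      refine ((hWint.const_mul ((d:ℝ) * M1 ^ 2)).mono'
        (hGmeas.pow_const 2).aestronglyMeasurable ?_)
      filter_upwards [haeP] with p hp
      rw [Real.norm_eq_abs, abs_of_nonneg (sq_nonneg _)]
      exact hG2b p.1 hp p.2
    have hGbintP : Integrable (fun p : ℝ × Ω => G p.1 p.2 * b p.2) P := by
      refine ((hWint.const_mul ((d:ℝ) * M1)).mono'
        (hGmeas.mul (hbmeas.comp measurable_snd)).aestronglyMeasurable ?_)
      filter_upwards [haeP] with p hp
      rw [Real.norm_eq_abs, abs_mul]
      have h1 : |G p.1 p.2| ≤ M1 * ∑ j, |B (c p.1) p.2 j| := hGb p.1 hp p.2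
      have h2 : ∀ j : Fin d, |B (c p.1) p.2 j| * |b p.2| ≤
          ((B (c p.1) p.2 j) ^ 2 + (b p.2) ^ 2) / 2 := by
        intro j
        nlinarith [sq_nonneg (|B (c p.1) p.2 j| - |b p.2|), sq_abs (B (c p.1) p.2 j),
          sq_abs (b p.2), abs_nonneg (B (c p.1) p.2 j), abs_nonneg (b p.2)]
      calc |G p.1 p.2| * |b p.2|
          ≤ (M1 * ∑ j, |B (c p.1) p.2 j|) * |b p.2| :=
            mul_le_mul_of_nonneg_right h1 (abs_nonneg _)
        _ = M1 * ∑ j, |B (c p.1) p.2 j| * |b p.2| := by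
            rw [mul_assoc, Finset.sum_mul]
        _ ≤ M1 * ∑ j, ((B (c p.1) p.2 j) ^ 2 + (b p.2) ^ 2) / 2 :=
            mul_le_mul_of_nonneg_left (Finset.sum_le_sum fun j _ => h2 j) hM10
        _ = M1 * (((∑ j, (B (c p.1) p.2 j) ^ 2) + (d:ℝ) * (b p.2) ^ 2) / 2) := by
            congr 1
            rw [← Finset.sum_div, Finset.sum_add_distrib, Finset.sum_const, Finset.card_univ,
              nsmul_eq_mul, Fintype.card_fin]
        _ ≤ ((d:ℝ) * M1) * W p := by
            have hs1 := hsumle p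
            have hs2 := hble p
            have hs3 := hWnn p
            have e1 : M1 * (∑ j, (B (c p.1) p.2 j) ^ 2) ≤ M1 * W p :=
              mul_le_mul_of_nonneg_left hs1 hM10
            have e2 : M1 * (b p.2) ^ 2 ≤ M1 * W p := mul_le_mul_of_nonneg_left hs2 hM10
            have e3 : (d:ℝ) * (M1 * (b p.2) ^ 2) ≤ (d:ℝ) * (M1 * W p) :=
              mul_le_mul_of_nonneg_left e2 (by linarith)
            have e4 : 0 ≤ ((d:ℝ) - 1) * (M1 * W p) :=
              mul_nonneg (by linarith) (mul_nonneg hM10 hs3)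
            have s1 : (∑ j, (B (c p.1) p.2 j) ^ 2) + (d:ℝ) * (b p.2) ^ 2
                ≤ W p + (d:ℝ) * W p :=
              add_le_add hs1 (mul_le_mul_of_nonneg_left hs2 (by linarith))
            have s2 : W p + (d:ℝ) * W p ≤ 2 * ((d:ℝ) * W p) := by
              have : W p ≤ (d:ℝ) * W p := by
                calc W p = 1 * W p := (one_mul _).symm
                  _ ≤ (d:ℝ) * W p := mul_le_mul_of_nonneg_right hd1 hs3
              linarith
            calc M1 * (((∑ j, (B (c p.1) p.2 j) ^ 2) + (d:ℝ) * (b p.2) ^ 2) / 2)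
                ≤ M1 * ((2 * ((d:ℝ) * W p)) / 2) := by
                  refine mul_le_mul_of_nonneg_left ?_ hM10
                  exact (div_le_div_iff_of_pos_right (by norm_num : (0:ℝ) < 2)).mpr (le_trans s1 s2)
                _ = ((d:ℝ) * M1) * W p := by ring
    have hGintP : Integrable (fun p : ℝ × Ω => G p.1 p.2) P :=
      MemLp.integrable one_le_two
        ((memLp_two_iff_integrable_sq hGmeas.aestronglyMeasurable).mpr hG2intP)
    set I : Ω → ℝ := fun ω => ∫ s, G s ω ∂ν with hIdef
    have hIint : Integrable I (ℙ : Measure Ω) := hGintP.integral_prod_right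
    have hJint : Integrable (fun ω => ∫ s, (G s ω) ^ 2 ∂ν) (ℙ : Measure Ω) :=
      hG2intP.integral_prod_right
    have hGL2path : ∀ ω, MemLp (fun s => G s ω) 2 ν := by
      intro ω
      refine (memLp_two_iff_integrable_sq (hGcont ω).aestronglyMeasurable).mpr ?_
      exact ((hGcont ω).pow 2).integrableOn_Ioc
    have hCSpath : ∀ ω, (I ω) ^ 2 ≤ u * ∫ s, (G s ω) ^ 2 ∂ν := fun ω =>
      aux_sq_setIntegral_le hu0.le (hGL2path ω)
    have hI2int : Integrable (fun ω => (I ω) ^ 2) (ℙ : Measure Ω) := by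
      have hsm : AEStronglyMeasurable (fun ω => (I ω) ^ 2) (ℙ : Measure Ω) := by
        simpa [pow_two, Pi.mul_def] using hIint.aestronglyMeasurable.mul hIint.aestronglyMeasurable
      refine (hJint.const_mul u).mono' hsm ?_
      refine Filter.Eventually.of_forall fun ω => ?_
      rw [Real.norm_eq_abs, abs_of_nonneg (sq_nonneg _)]
      exact hCSpath ω
    have hIL2 : MemLp I 2 (ℙ : Measure Ω) :=
      (memLp_two_iff_integrable_sq hIint.aestronglyMeasurable).mpr hI2int
    have hIbint : Integrable (fun ω => I ω * b ω) (ℙ : Measure Ω) := aux_mul_int hIL2 hbL2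
    -- second moment of b
    have hEb : ∫ ω, (b ω) ^ 2 ∂(ℙ : Measure Ω) = u ^ (2*H) := hBsqval u huI i
    -- bound on E[I²]
    have hswap2 : ∫ s, (∫ ω, (G s ω) ^ 2 ∂(ℙ : Measure Ω)) ∂ν
        = ∫ ω, (∫ s, (G s ω) ^ 2 ∂ν) ∂(ℙ : Measure Ω) :=
      integral_integral_swap (f := fun s ω => (G s ω) ^ 2) hG2intP
    have hEg2 : ∀ s ∈ Ioc (0:ℝ) u, ∫ ω, (G s ω) ^ 2 ∂(ℙ : Measure Ω)
        = ∑ j, (aEnt A (u - s) i j) ^ 2 * s ^ (2*H) := by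
      intro s hs
      have hcs : c s = s := c_eq s (hsmem s hs)
      have hL2s : ∀ j, MemLp (fun ω => B (c s) ω j) 2 (ℙ : Measure Ω) := fun j => by
        simpa [hcs] using hBL2 s (hsmem s hs) hs.1 j
      have hexp : ∀ ω, (G s ω) ^ 2 = ∑ j, ∑ k,
          (aEnt A (u - s) i j * aEnt A (u - s) i k) * (B (c s) ω j * B (c s) ω k) := by
        intro ω
        rw [pow_two]
        simp only [hG]
        rw [Finset.sum_mul_sum]
        refine Finset.sum_congr rfl fun j _ => Finset.sum_congr rfl fun k _ => by ring
      have hint_jk : ∀ j k : Fin d, Integrable (fun ω =>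
          (aEnt A (u - s) i j * aEnt A (u - s) i k) * (B (c s) ω j * B (c s) ω k))
          (ℙ : Measure Ω) := fun j k => (aux_mul_int (hL2s j) (hL2s k)).const_mul _
      calc ∫ ω, (G s ω) ^ 2 ∂(ℙ : Measure Ω)
          = ∫ ω, ∑ j, ∑ k, (aEnt A (u - s) i j * aEnt A (u - s) i k) *
              (B (c s) ω j * B (c s) ω k) ∂(ℙ : Measure Ω) := by simp only [hexp]
        _ = ∑ j, ∑ k, (aEnt A (u - s) i j * aEnt A (u - s) i k) *
              ∫ ω, B (c s) ω j * B (c s) ω k ∂(ℙ : Measure Ω) := by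
            rw [integral_finset_sum _ fun j _ => integrable_finset_sum _ fun k _ => hint_jk j k]
            refine Finset.sum_congr rfl fun j _ => ?_
            rw [integral_finset_sum _ fun k _ => hint_jk j k]
            exact Finset.sum_congr rfl fun k _ => integral_const_mul _ _
        _ = ∑ j, (aEnt A (u - s) i j) ^ 2 * s ^ (2*H) := by
            refine Finset.sum_congr rfl fun j _ => ?_
            rw [Finset.sum_eq_single j]
            · simp only [hcs]
              rw [hcov j j s s (hsmem s hs) (hsmem s hs), if_pos rfl]
              simp only [sub_self, abs_zero, Real.zero_rpow (ne_of_gt hH0), sub_zero]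
              ring
            · intro k _ hk
              simp only [hcs]
              rw [hcov j k s s (hsmem s hs) (hsmem s hs), if_neg (Ne.symm hk), mul_zero]
            · intro hj; exact absurd (Finset.mem_univ j) hj
    have hEI2 : ∫ ω, (I ω) ^ 2 ∂(ℙ : Measure Ω) ≤ (d:ℝ) * M2 * u ^ (2*H) := by
      have hXnn : 0 ≤ (d:ℝ) * M2 * u ^ (2*H) :=
        mul_nonneg (mul_nonneg (by linarith) hM20) (Real.rpow_nonneg hu.1 _)
      have h1 : ∫ ω, (I ω) ^ 2 ∂(ℙ : Measure Ω)
          ≤ ∫ ω, u * ∫ s, (G s ω) ^ 2 ∂ν ∂(ℙ : Measure Ω) :=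
        integral_mono hI2int (hJint.const_mul u) fun ω => hCSpath ω
      have h2 : ∫ ω, u * (∫ s, (G s ω) ^ 2 ∂ν) ∂(ℙ : Measure Ω)
          = u * ∫ s, (∫ ω, (G s ω) ^ 2 ∂(ℙ : Measure Ω)) ∂ν := by
        rw [integral_const_mul, hswap2]
      have h3 : ∫ s, (∫ ω, (G s ω) ^ 2 ∂(ℙ : Measure Ω)) ∂ν
          ≤ ∫ s, ((d:ℝ) * M2 * u ^ (2*H)) ∂ν := by
        refine integral_mono_ae hG2intP.integral_prod_left (integrable_const _) ?_
        filter_upwards [hae_mem] with s hs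
        rw [hEg2 s hs]
        calc (∑ j, (aEnt A (u - s) i j) ^ 2 * s ^ (2*H))
            ≤ ∑ _j : Fin d, M2 * u ^ (2*H) := by
              refine Finset.sum_le_sum fun j _ => ?_
              exact mul_le_mul (hM2le i j _ (husmem s hs))
                (Real.rpow_le_rpow hs.1.le hs.2 hH0.le)
                (Real.rpow_nonneg hs.1.le _) hM20
          _ = (d:ℝ) * M2 * u ^ (2*H) := by
              rw [Finset.sum_const, Finset.card_univ]
              simp [nsmul_eq_mul]; ring
      have h4 : ∫ _s, ((d:ℝ) * M2 * u ^ (2*H)) ∂ν = u * ((d:ℝ) * M2 * u ^ (2*H)) := by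
        rw [integral_const]
        simp [hν, Measure.restrict_apply_univ, Real.volume_Ioc,
          ENNReal.toReal_ofReal hu.1, smul_eq_mul, hu.1]
      calc ∫ ω, (I ω) ^ 2 ∂(ℙ : Measure Ω)
          ≤ u * ∫ s, (∫ ω, (G s ω) ^ 2 ∂(ℙ : Measure Ω)) ∂ν := by rw [← h2]; exact h1
        _ ≤ u * (u * ((d:ℝ) * M2 * u ^ (2*H))) := by
            rw [← h4]
            exact mul_le_mul_of_nonneg_left h3 hu.1
        _ ≤ (d:ℝ) * M2 * u ^ (2*H) := by
            nlinarith [mul_nonneg (mul_nonneg hu.1 (sub_nonneg.2 hu.2)) hXnn,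
              mul_nonneg (sub_nonneg.2 hu.2) hXnn]
    -- bound on E[I b]
    have hIb_eq : ∀ ω, I ω * b ω = ∫ s, G s ω * b ω ∂ν := fun ω =>
      (integral_mul_const (b ω) fun s => G s ω).symm
    have hswap1 : ∫ s, (∫ ω, G s ω * b ω ∂(ℙ : Measure Ω)) ∂ν
        = ∫ ω, (∫ s, G s ω * b ω ∂ν) ∂(ℙ : Measure Ω) :=
      integral_integral_swap (f := fun s ω => G s ω * b ω) hGbintP
    have hEgb : ∀ s ∈ Ioc (0:ℝ) u, ∫ ω, G s ω * b ω ∂(ℙ : Measure Ω)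
        = aEnt A (u - s) i i * ((s ^ (2*H) + u ^ (2*H) - (u - s) ^ (2*H)) / 2) := by
      intro s hs
      have hcs : c s = s := c_eq s (hsmem s hs)
      have hL2s : ∀ j, MemLp (fun ω => B (c s) ω j) 2 (ℙ : Measure Ω) := fun j => by
        simpa [hcs] using hBL2 s (hsmem s hs) hs.1 j
      have hexp : ∀ ω, G s ω * b ω = ∑ j, aEnt A (u - s) i j * (B (c s) ω j * B u ω i) := by
        intro ω
        simp only [hG, hb]
        rw [Finset.sum_mul]
        exact Finset.sum_congr rfl fun j _ => by ring
      have hintj : ∀ j, Integrable (fun ω => aEnt A (u - s) i j * (B (c s) ω j * B u ω i))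
          (ℙ : Measure Ω) := fun j => (aux_mul_int (hL2s j) hbL2).const_mul _
      calc ∫ ω, G s ω * b ω ∂(ℙ : Measure Ω)
          = ∑ j, aEnt A (u - s) i j * ∫ ω, B (c s) ω j * B u ω i ∂(ℙ : Measure Ω) := by
            simp only [hexp]
            rw [integral_finset_sum _ fun j _ => hintj j]
            exact Finset.sum_congr rfl fun j _ => integral_const_mul _ _
        _ = aEnt A (u - s) i i * ((s ^ (2*H) + u ^ (2*H) - (u - s) ^ (2*H)) / 2) := by
            rw [Finset.sum_eq_single i]
            · simp only [hcs]
              rw [hcov i i s u (hsmem s hs) huI, if_pos rfl,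
                abs_of_nonneg (by linarith [hs.2] : (0:ℝ) ≤ u - s)]
            · intro k _ hk
              simp only [hcs]
              rw [hcov k i s u (hsmem s hs) huI, if_neg hk, mul_zero]
            · intro hj; exact absurd (Finset.mem_univ i) hj
    have hccnn : ∀ s ∈ Ioc (0:ℝ) u, 0 ≤ (s ^ (2*H) + u ^ (2*H) - (u - s) ^ (2*H)) / 2 := by
      intro s hs
      have h1 : (u - s) ^ (2*H) ≤ u ^ (2*H) :=
        Real.rpow_le_rpow (by linarith [hs.2]) (by linarith [hs.1]) hH0.le
      have h2 : 0 ≤ s ^ (2*H) := Real.rpow_nonneg hs.1.le _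
      linarith
    have hccCont : Continuous fun s : ℝ => (s ^ (2*H) + u ^ (2*H) - (u - s) ^ (2*H)) / 2 :=
      (((hrpc.add continuous_const).sub (hrpc.comp (continuous_const.sub continuous_id)))).div_const 2
    have hccint : Integrable (fun s => (s ^ (2*H) + u ^ (2*H) - (u - s) ^ (2*H)) / 2) ν :=
      hccCont.integrableOn_Ioc
    have hccval : ∫ s, ((s ^ (2*H) + u ^ (2*H) - (u - s) ^ (2*H)) / 2) ∂ν
        = u * u ^ (2*H) / 2 := by
      rw [hν, ← intervalIntegral.integral_of_le hu0.le]
      have e1 : IntervalIntegrable (fun s : ℝ => s ^ (2*H)) volume 0 u :=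
        hrpc.intervalIntegrable _ _
      have e2 : IntervalIntegrable (fun s : ℝ => (u - s) ^ (2*H)) volume 0 u :=
        (hrpc.comp (continuous_const.sub continuous_id)).intervalIntegrable _ _
      have e3 : IntervalIntegrable (fun _ : ℝ => u ^ (2*H)) volume 0 u :=
        intervalIntegrable_const
      have hsub : (∫ s in (0:ℝ)..u, (u - s) ^ (2*H)) = ∫ s in (0:ℝ)..u, s ^ (2*H) := by
        have := intervalIntegral.integral_comp_sub_left (a := (0:ℝ)) (b := u)
          (fun s => s ^ (2*H)) u
        simpa using this
      rw [intervalIntegral.integral_div, intervalIntegral.integral_sub (e1.add e3) e2,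
        intervalIntegral.integral_add e1 e3, hsub]
      simp only [intervalIntegral.integral_const, sub_zero, smul_eq_mul]
      ring
    have hEIb : ∫ ω, I ω * b ω ∂(ℙ : Measure Ω) ≤ M1 * (u * u ^ (2*H)) / 2 := by
      have h0 : ∫ ω, I ω * b ω ∂(ℙ : Measure Ω)
          = ∫ s, (∫ ω, G s ω * b ω ∂(ℙ : Measure Ω)) ∂ν := by
        rw [hswap1]
        simp only [hIb_eq]
      rw [h0]
      calc ∫ s, (∫ ω, G s ω * b ω ∂(ℙ : Measure Ω)) ∂ν
          ≤ ∫ s, M1 * ((s ^ (2*H) + u ^ (2*H) - (u - s) ^ (2*H)) / 2) ∂ν := by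
            refine integral_mono_ae hGbintP.integral_prod_left (hccint.const_mul M1) ?_
            filter_upwards [hae_mem] with s hs
            rw [hEgb s hs]
            exact mul_le_mul_of_nonneg_right
              ((le_abs_self _).trans (hM1le i i _ (husmem s hs))) (hccnn s hs)
        _ = M1 * (u * u ^ (2*H)) / 2 := by
            rw [integral_const_mul, hccval]
            ring
    -- combine
    have hexp2 : (fun ω => (I ω + b ω) ^ 2)
        = fun ω => (I ω) ^ 2 + (2 * (I ω * b ω) + (b ω) ^ 2) := funext fun ω => by ring
    have hsum_int : Integrable (fun ω => (I ω + b ω) ^ 2) (ℙ : Measure Ω) := by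
      rw [hexp2]
      exact hI2int.add ((hIbint.const_mul 2).add hbsq)
    have hfc2 : (fun ω => (fouCentered A B u ω i) ^ 2) = fun ω => (I ω + b ω) ^ 2 :=
      funext fun ω => by rw [hfc ω]
    constructor
    · rw [hfc2]; exact hsum_int
    · rw [hfc2]
      have hsplit : ∫ ω, (I ω + b ω) ^ 2 ∂(ℙ : Measure Ω)
          = ∫ ω, (I ω) ^ 2 ∂(ℙ : Measure Ω)
            + (2 * ∫ ω, I ω * b ω ∂(ℙ : Measure Ω) + ∫ ω, (b ω) ^ 2 ∂(ℙ : Measure Ω)) := by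
        have hg1 : Integrable (fun ω => 2 * (I ω * b ω)) (ℙ : Measure Ω) :=
          hIbint.const_mul 2
        have hg2 : Integrable (fun ω => 2 * (I ω * b ω) + (b ω) ^ 2) (ℙ : Measure Ω) :=
          hg1.add hbsq
        rw [hexp2, integral_add hI2int hg2, integral_add hg1 hbsq, integral_const_mul]
      rw [hsplit, hEb]
      have huu : u * u ^ (2*H) ≤ u ^ (2*H) := by
        nlinarith [Real.rpow_nonneg hu.1 (2*H), hu.2, hu.1]
      have h2Ib : 2 * ∫ ω, I ω * b ω ∂(ℙ : Measure Ω) ≤ M1 * u ^ (2*H) := by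
        calc 2 * ∫ ω, I ω * b ω ∂(ℙ : Measure Ω) ≤ 2 * (M1 * (u * u ^ (2*H)) / 2) := by
              linarith [hEIb]
          _ = M1 * (u * u ^ (2*H)) := by ring
          _ ≤ M1 * u ^ (2*H) := mul_le_mul_of_nonneg_left huu hM10
      have hre : ((d:ℝ) * M2 + M1 + 1) * u ^ (2*H)
          = (d:ℝ) * M2 * u ^ (2*H) + M1 * u ^ (2*H) + u ^ (2*H) := by ring
      linarith [hEI2, h2Ib]
  -- sum over coordinates
  rw [integral_finset_sum _ fun i _ => (key i).1]
  have hstep : (∑ i : Fin d, ∫ ω, (fouCentered A B u ω i) ^ 2 ∂(ℙ : Measure Ω))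
      ≤ ∑ _i : Fin d, ((d:ℝ) * M2 + M1 + 1) * u ^ (2*H) :=
    Finset.sum_le_sum fun i _ => (key i).2
  have hsum_const : (∑ _i : Fin d, ((d:ℝ) * M2 + M1 + 1) * u ^ (2*H))
      = (d:ℝ) * (((d:ℝ) * M2 + M1 + 1) * u ^ (2*H)) := by
    rw [Finset.sum_const, Finset.card_univ]
    simp [nsmul_eq_mul]
  have hup : 0 ≤ u ^ (2*H) := Real.rpow_nonneg hu.1 _
  have hd1 : (1:ℝ) ≤ d := by exact_mod_cast hd
  have hC2 : entC2 A = M2 + M1 + 1 := rfl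
  calc (∑ i : Fin d, ∫ ω, (fouCentered A B u ω i) ^ 2 ∂(ℙ : Measure Ω))
      ≤ (d:ℝ) * (((d:ℝ) * M2 + M1 + 1) * u ^ (2*H)) := by rw [← hsum_const]; exact hstep
    _ ≤ (d:ℝ) ^ 2 * entC2 A * u ^ (2*H) := by
        rw [hC2]
        nlinarith [mul_nonneg hup (mul_nonneg (mul_nonneg
            (sub_nonneg.2 hd1) (by linarith : (0:ℝ) ≤ (d:ℝ))) hM10),
          mul_nonneg hup (mul_nonneg (sub_nonneg.2 hd1) (by linarith : (0:ℝ) ≤ (d:ℝ)))]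
    _ = (d:ℝ) ^ 2 * entC2 A * u ^ (2*H) := rfl
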